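/- Let q, d, ℓ be positive integers with q ≥ d + 1. Then an OR relation of arity d·ℓ − 1 is definable from NUR(d,ℓ,q). Concretely, taking α ∈ [q]^{d×ℓ} with α_{i,j} = i, J = ([d]×[ℓ]) \ {(1,1)}, β_{1,j} = d+1 for j ≥ 2, and β_{i,j} = 1 for i ≥ 2: every matrix M with M_{1,1} = 1, M_{i,j} ∈ {α_{i,j}, β_{i,j}} for (i,j) ∈ J, and M ≠ α, fails to be uniformly rainbow (i.e., belongs to NUR(d,ℓ,q)), while α itself is uniformly rainbow. -/
import Mathlib


/-- A `d × l` matrix over `Fin q` is uniformly rainbow if each column has pairwise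
distinct entries and all columns have the same set of entries. -/
def UniformlyRainbow {d l q : ℕ} (M : Fin d → Fin l → Fin q) : Prop :=
  (∀ j, Function.Injective fun i => M i j) ∧
  ∀ j j' : Fin l, (Finset.univ.image fun i => M i j) = Finset.univ.image fun i => M i j'

/-- For `q ≥ d + 1`, an OR relation of arity `d·l − 1` is definable from `NUR(d,l,q)`,
witnessed by `α i j = i`, `J = ([d]×[l]) \ {(1,1)}`, `β` equal to `d+1` on the first row
and `1` elsewhere (0-indexed: `⟨d,_⟩` and `0`). -/
theorem stmt1 (d l q : ℕ) (hd : 0 < d) (hl : 0 < l) (hq : d + 1 ≤ q) :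
    let α : Fin d → Fin l → Fin q := fun i _ => Fin.castLE (by omega) i
    UniformlyRainbow α ∧
    ∀ M : Fin d → Fin l → Fin q,
      M ⟨0, hd⟩ ⟨0, hl⟩ = α ⟨0, hd⟩ ⟨0, hl⟩ →
      (∀ i j, (i, j) ≠ ((⟨0, hd⟩ : Fin d), (⟨0, hl⟩ : Fin l)) →
        M i j = α i j ∨
          M i j = (if (i : ℕ) = 0 then (⟨d, by omega⟩ : Fin q) else ⟨0, by omega⟩)) →
      M ≠ α → ¬ UniformlyRainbow M := by
  intro α
  constructor
  · constructor
    · intro j a b h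
      exact Fin.castLE_injective _ h
    · intro j j'; rfl
  · intro M h00 hM hne hUR
    obtain ⟨hinj, himg⟩ := hUR
    have hcol0 : ∀ i : Fin d, (M i ⟨0, hl⟩ : ℕ) < d := by
      intro i
      by_cases hi : i = (⟨0, hd⟩ : Fin d)
      · subst hi
        rw [h00]
        simpa [α] using hd
      · have hne' : (i, (⟨0, hl⟩ : Fin l)) ≠ ((⟨0, hd⟩ : Fin d), (⟨0, hl⟩ : Fin l)) := by
          simp [hi]
        rcases hM i _ hne' with h | h
        · rw [h]; exact i.isLt
        · rw [h]
          have : (i : ℕ) ≠ 0 := by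
            intro h0; exact hi (Fin.ext h0)
          simp [this]; omega
    -- the key contradiction when some first-row entry equals d
    have hrowd : ∀ j : Fin l, M ⟨0, hd⟩ j = (⟨d, by omega⟩ : Fin q) → False := by
      intro j hj
      have hmem : (⟨d, by omega⟩ : Fin q) ∈ Finset.univ.image fun i => M i j :=
        Finset.mem_image.mpr ⟨⟨0, hd⟩, Finset.mem_univ _, hj⟩
      rw [himg j ⟨0, hl⟩] at hmem
      obtain ⟨i', _, hi'⟩ := Finset.mem_image.mp hmem
      have := hcol0 i'
      rw [hi'] at this
      simp at this
    obtain ⟨i, hi⟩ := Function.ne_iff.mp hne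
    obtain ⟨j, hij⟩ := Function.ne_iff.mp hi
    have hij0 : (i, j) ≠ ((⟨0, hd⟩ : Fin d), (⟨0, hl⟩ : Fin l)) := by
      intro h
      rw [Prod.mk.injEq] at h
      exact hij (h.1 ▸ h.2 ▸ h00)
    have hβ : M i j = (if (i : ℕ) = 0 then (⟨d, by omega⟩ : Fin q) else ⟨0, by omega⟩) :=
      (hM i j hij0).resolve_left hij
    by_cases hi0 : (i : ℕ) = 0
    · have : i = (⟨0, hd⟩ : Fin d) := Fin.ext hi0
      subst this
      rw [if_pos rfl] at hβ
      exact hrowd j hβ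
    · rw [if_neg hi0] at hβ
      -- M i j = 0; look at M 0 j
      have hcase : M ⟨0, hd⟩ j = (⟨0, by omega⟩ : Fin q) ∨
          M ⟨0, hd⟩ j = (⟨d, by omega⟩ : Fin q) := by
        by_cases hj0 : j = (⟨0, hl⟩ : Fin l)
        · subst hj0; left; exact h00
        · rcases hM ⟨0, hd⟩ j (by simp [hj0]) with h | h
          · left; exact h
          · right; simp [h]
      rcases hcase with h | h
      · have : i = (⟨0, hd⟩ : Fin d) := hinj j (show M i j = M ⟨0, hd⟩ j by rw [hβ, h])
        exact hi0 (by rw [this])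
      · exact hrowd j h
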